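/- arXiv:2601.12185 — 2 statements merged into one kernel-verified Lean document; each statement's English description precedes it below -/
import Mathlib

section
/- For a finite group G, the dimension of the ℂ-subspace of class functions on G spanned by the rational-valued characters of G equals the number of conjugacy classes of cyclic subgroups of G. -/
/-- The induced character `(1_C)^G` of the trivial character of a subgroup `C`. -/
noncomputable def indTriv (G : Type) [Group G] [Fintype G] (C : Subgroup G) : G → ℂ :=
  fun g => (Nat.card {x : G // x⁻¹ * g * x ∈ C} : ℂ) / (Nat.card C : ℂ)

/-- `χ : G → ℂ` is a character: the trace of a nonzero finite-dimensional complex rep. -/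
def IsCharacter (G : Type) [Group G] (χ : G → ℂ) : Prop :=
  ∃ V : FDRep ℂ G, χ = V.character ∧ χ ≠ 0

/-- `χ` is an irreducible character of `G`. -/
def IsIrredChar (G : Type) [Group G] (χ : G → ℂ) : Prop :=
  ∃ V : FDRep ℂ G, CategoryTheory.Simple V ∧ χ = V.character

/-- All values of `χ` are rational. -/
def IsRatValued {G : Type} (χ : G → ℂ) : Prop := ∀ g : G, ∃ q : ℚ, χ g = (q : ℂ)

/-- Subgroups `H` and `K` are conjugate in `G`. -/
def SubConj {G : Type} [Group G] (H K : Subgroup G) : Prop :=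
  ∃ g : G, Subgroup.map (MulAut.conj g).toMonoidHom H = K

/-- The ℂ-subspace of `G → ℂ` spanned by the rational valued characters of `G`. -/
noncomputable def ratCharSpan (G : Type) [Group G] : Submodule ℂ (G → ℂ) :=
  Submodule.span ℂ {χ : G → ℂ | IsCharacter G χ ∧ IsRatValued χ}

/-- The number of conjugacy classes of cyclic subgroups of `G`. -/
noncomputable def numCyclicClasses (G : Type) [Group G] : ℕ :=
  Nat.card (Quot (fun H K : {H : Subgroup G // IsCyclic ↥H} => SubConj H.1 K.1))

/-- Indicator function of the set of `g` with `⟨g⟩` conjugate to `⟨x⟩`. -/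
noncomputable def Phi (G : Type) [Group G] (x : G) : G → ℂ := fun g =>
  letI := Classical.propDecidable
  if SubConj (Subgroup.zpowers g) (Subgroup.zpowers x) then 1 else 0

/-- The cyclotomic field `ℚ(e^{2πi/n})` as a subfield of `ℂ`. -/
noncomputable def cycField (n : ℕ) : IntermediateField ℚ ℂ :=
  IntermediateField.adjoin ℚ ({Complex.exp (2 * Real.pi * Complex.I / n)} : Set ℂ)

/-- `ψ` is in the `Gal(ℚ(ζ_n)/ℚ)`-orbit of `χ` (acting on character values). -/
def galRel (G : Type) [Group G] (n : ℕ) (χ ψ : G → ℂ) : Prop :=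
  ∃ σ : cycField n ≃ₐ[ℚ] cycField n,
    ∀ g : G, ∃ h : χ g ∈ cycField n, (σ ⟨χ g, h⟩ : ℂ) = ψ g

/-- The field `ℚ(χ)` generated by the values of `χ`. -/
noncomputable def charField (G : Type) (χ : G → ℂ) : IntermediateField ℚ ℂ :=
  IntermediateField.adjoin ℚ (Set.range χ)

/-- The rationalization `χ^rat = ∑_{σ ∈ Gal(ℚ(χ)/ℚ)} χ^σ`. -/
noncomputable def ratzn (G : Type) [Group G] (χ : G → ℂ) : G → ℂ :=
  fun g => ∑ᶠ σ : charField G χ ≃ₐ[ℚ] charField G χ,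
    (σ ⟨χ g, IntermediateField.subset_adjoin ℚ _ ⟨g, rfl⟩⟩ : ℂ)

/-- The induced character of a character `φ` of a subgroup `H`. -/
noncomputable def inducedChar (G : Type) [Group G] [Fintype G] (H : Subgroup G)
    (φ : H → ℂ) : G → ℂ := fun g =>
  letI := Classical.propDecidable
  (Nat.card H : ℂ)⁻¹ * ∑ x : G, if h : x⁻¹ * g * x ∈ H then φ ⟨x⁻¹ * g * x, h⟩ else 0

/- ===== auxiliary development ===== -/

section SubConjEquiv
variable {G : Type} [Group G]

lemma conj_comp_conj (a b : G) :
    (MulAut.conj a).toMonoidHom.comp (MulAut.conj b).toMonoidHom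
      = (MulAut.conj (a * b)).toMonoidHom := by
  ext x; simp [mul_assoc]

lemma conj_one_toMonoidHom : (MulAut.conj (1 : G)).toMonoidHom = MonoidHom.id G := by
  ext x; simp

lemma subConj_refl (H : Subgroup G) : SubConj H H :=
  ⟨1, by rw [conj_one_toMonoidHom, Subgroup.map_id]⟩

lemma subConj_symm {H K : Subgroup G} (h : SubConj H K) : SubConj K H := by
  obtain ⟨g, rfl⟩ := h
  exact ⟨g⁻¹, by rw [Subgroup.map_map, conj_comp_conj, inv_mul_cancel,
    conj_one_toMonoidHom, Subgroup.map_id]⟩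

lemma subConj_trans {H K L : Subgroup G} (h1 : SubConj H K) (h2 : SubConj K L) : SubConj H L := by
  obtain ⟨g, rfl⟩ := h1
  obtain ⟨g', rfl⟩ := h2
  exact ⟨g' * g, by rw [Subgroup.map_map, conj_comp_conj]⟩

lemma map_conj_zpowers (g k : G) :
    Subgroup.map (MulAut.conj k).toMonoidHom (Subgroup.zpowers g)
      = Subgroup.zpowers (k * g * k⁻¹) := by
  rw [MonoidHom.map_zpowers]; rfl

end SubConjEquiv

section Classes
variable (G : Type) [Group G]

/-- relation on elements: generated cyclic subgroups conjugate -/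
def rrel : G → G → Prop := fun g h => SubConj (Subgroup.zpowers g) (Subgroup.zpowers h)

def rSetoid : Setoid G :=
  ⟨rrel G, ⟨fun _ => subConj_refl _, subConj_symm, subConj_trans⟩⟩

abbrev QG := Quotient (rSetoid G)

def cSetoid : Setoid {H : Subgroup G // IsCyclic ↥H} :=
  ⟨fun H K => SubConj H.1 K.1, ⟨fun _ => subConj_refl _, subConj_symm, subConj_trans⟩⟩

lemma isCyclic_zpowers (g : G) : IsCyclic ↥(Subgroup.zpowers g) := by
  refine ⟨⟨g, Subgroup.mem_zpowers g⟩, ?_⟩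
  rintro ⟨x, k, rfl⟩
  exact ⟨k, Subtype.ext (by simp)⟩

lemma zpowers_eq_of_generator {H : Subgroup G} (g : ↥H) (hg : ∀ x : ↥H, x ∈ Subgroup.zpowers g) :
    Subgroup.zpowers (g : G) = H := by
  ext x
  constructor
  · rintro ⟨k, rfl⟩
    exact (Subgroup.zpow_mem H g.2 k)
  · intro hx
    obtain ⟨k, hk⟩ := hg ⟨x, hx⟩
    exact ⟨k, by simpa using congrArg (Subtype.val) hk⟩

/-- the map from element-classes to cyclic-subgroup-classes -/
noncomputable def classMap : QG G → Quotient (cSetoid G) :=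
  Quotient.map' (fun g => (⟨Subgroup.zpowers g, isCyclic_zpowers G g⟩
    : {H : Subgroup G // IsCyclic ↥H})) (fun _ _ h => h)

lemma classMap_bij : Function.Bijective (classMap G) := by
  constructor
  · rintro ⟨g⟩ ⟨h⟩ hq
    exact Quotient.sound' (Quotient.exact' (s₁ := cSetoid G) hq)
  · rintro ⟨⟨H, hH⟩⟩
    obtain ⟨g, hg⟩ := hH.exists_generator
    refine ⟨Quotient.mk'' (g : G), ?_⟩
    apply Quotient.sound' (s₁ := cSetoid G)
    show SubConj (Subgroup.zpowers (g : G)) H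
    rw [zpowers_eq_of_generator G g hg]
    exact subConj_refl _

lemma card_QG : Nat.card (QG G) = numCyclicClasses G :=
  Nat.card_congr (Equiv.ofBijective _ (classMap_bij G))

end Classes

section Basis
open scoped Classical
variable (G : Type) [Group G] [Fintype G]

noncomputable instance : Fintype (QG G) := by
  classical exact Quotient.fintype _

/-- the basis family of indicators indexed by classes -/
noncomputable def phib : QG G → (G → ℂ) := fun q => Phi G q.out

omit [Fintype G] in
lemma Phi_apply (x g : G) :
    Phi G x g = if rrel G g x then 1 else 0 := by
  rfl

omit [Fintype G] in
lemma rrel_iff_eq (g h : G) : rrel G g h ↔ (⟦g⟧ : QG G) = ⟦h⟧ := by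
  constructor
  · exact fun hr => Quotient.sound hr
  · exact fun hq => Quotient.exact hq

omit [Fintype G] in
lemma Phi_eq_phib (x : G) : Phi G x = phib G ⟦x⟧ := by
  funext g
  rw [phib, Phi_apply, Phi_apply]
  have : rrel G g x ↔ rrel G g (⟦x⟧ : QG G).out := by
    rw [rrel_iff_eq, rrel_iff_eq, Quotient.out_eq]
  simp only [this]

omit [Fintype G] in
lemma phib_apply_out (q p : QG G) :
    phib G q p.out = if p = q then 1 else 0 := by
  rw [phib, Phi_apply]
  congr 1
  rw [rrel_iff_eq, Quotient.out_eq, Quotient.out_eq]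

lemma phib_linearIndependent : LinearIndependent ℂ (phib G) := by
  classical
  rw [Fintype.linearIndependent_iff]
  intro c hc p
  have h := congrFun hc p.out
  simp only [Finset.sum_apply, Pi.smul_apply, smul_eq_mul, Pi.zero_apply] at h
  rw [Finset.sum_eq_single p
    (fun q _ hq => by rw [phib_apply_out, if_neg (Ne.symm hq), mul_zero])
    (fun hp => absurd (Finset.mem_univ p) hp)] at h
  rwa [phib_apply_out, if_pos rfl, mul_one] at h

lemma finrank_span_phib :
    Module.finrank ℂ (Submodule.span ℂ (Set.range (phib G))) = Nat.card (QG G) := by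
  rw [finrank_span_eq_card (phib_linearIndependent G), Nat.card_eq_fintype_card]

/-- Any function constant on classes is a combination of the `phib`. -/
lemma eq_sum_phib (f : G → ℂ) (hf : ∀ g h : G, rrel G g h → f g = f h) :
    f = ∑ q : QG G, f q.out • phib G q := by
  funext g
  rw [Finset.sum_apply]
  simp only [Pi.smul_apply, smul_eq_mul]
  rw [Finset.sum_eq_single (⟦g⟧ : QG G) (fun q _ hq => ?_) (fun h => absurd (Finset.mem_univ _) h)]
  · rw [phib, Phi_apply, if_pos, mul_one]
    · exact hf _ _ ((rrel_iff_eq G _ _).2 (Quotient.out_eq _).symm)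
    · rw [rrel_iff_eq, Quotient.out_eq]
  · rw [phib, Phi_apply, if_neg, mul_zero]
    rw [rrel_iff_eq, Quotient.out_eq]
    exact fun hh => hq hh.symm

lemma mem_span_phib (f : G → ℂ) (hf : ∀ g h : G, rrel G g h → f g = f h) :
    f ∈ Submodule.span ℂ (Set.range (phib G)) := by
  rw [eq_sum_phib G f hf]
  exact Submodule.sum_mem _ fun q _ =>
    Submodule.smul_mem _ _ (Submodule.subset_span ⟨q, rfl⟩)

end Basis

section Spectral
open LinearMap Polynomial Finset
variable {G : Type} [Group G] [Fintype G]

lemma char_pow_coprime (V : FDRep ℂ G) (hrat : IsRatValued V.character)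
    (a : G) (m : ℕ) (hm : Nat.Coprime m (orderOf a)) :
    V.character (a ^ m) = V.character a := by
  classical
  set n := orderOf a with hn
  have hn0 : 0 < n := orderOf_pos a
  have hnC : (n : ℂ) ≠ 0 := Nat.cast_ne_zero.mpr hn0.ne'
  set u : Module.End ℂ V := V.ρ a with hudef
  have hu : u ^ n = 1 := by
    rw [hudef, ← map_pow, hn, pow_orderOf_eq_one, map_one]
  have hω := Complex.isPrimitiveRoot_exp n hn0.ne'
  set ω : ℂ := Complex.exp (2 * Real.pi * Complex.I / n) with hωdef
  have hωn : ω ^ n = 1 := hω.pow_eq_one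
  have hω0 : ω ≠ 0 := fun h => by
    rw [h, zero_pow hn0.ne'] at hωn; exact zero_ne_one hωn
  set ζ : ℂ := ω⁻¹ with hζdef
  have hωζ : ω * ζ = 1 := mul_inv_cancel₀ hω0
  have hζn : ζ ^ n = 1 := by
    rw [hζdef, inv_pow, hωn, inv_one]
  have hζ : IsPrimitiveRoot ζ n := hω.inv
  -- the projections
  set E : ℕ → Module.End ℂ V := fun i => (n : ℂ)⁻¹ • ∑ k ∈ range n, ζ ^ (i * k) • u ^ k with hE
  -- (c0) sum of projections is 1
  have c0 : ∑ i ∈ range n, E i = 1 := by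
    have hsum : ∑ i ∈ range n, ∑ k ∈ range n, ζ ^ (i * k) • u ^ k
        = ∑ k ∈ range n, (∑ i ∈ range n, (ζ ^ k) ^ i) • u ^ k := by
      rw [Finset.sum_comm]
      refine Finset.sum_congr rfl fun k _ => ?_
      rw [Finset.sum_smul]
      refine Finset.sum_congr rfl fun i _ => ?_
      rw [← pow_mul, mul_comm]
    have hinner : ∀ k ∈ range n, ((∑ i ∈ range n, (ζ ^ k) ^ i) • (u ^ k : Module.End ℂ V))
        = (if k = 0 then (n : ℂ) • (1 : Module.End ℂ V) else 0) := by
      intro k hk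
      rcases Nat.eq_zero_or_pos k with h | h
      · subst h; simp
      · rw [if_neg h.ne']
        have hne : ζ ^ k ≠ 1 := hζ.pow_ne_one_of_pos_of_lt h.ne' (Finset.mem_range.mp hk)
        rw [geom_sum_eq hne, ← pow_mul, mul_comm k n, pow_mul, hζn, one_pow, sub_self,
          zero_div, zero_smul]
    calc ∑ i ∈ range n, E i
        = (n : ℂ)⁻¹ • ∑ i ∈ range n, ∑ k ∈ range n, ζ ^ (i * k) • u ^ k := by
          rw [hE, Finset.smul_sum]
      _ = (n : ℂ)⁻¹ • ∑ k ∈ range n, (if k = 0 then (n : ℂ) • (1 : Module.End ℂ V) else 0) := by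
          rw [hsum, Finset.sum_congr rfl hinner]
      _ = 1 := by
          rw [Finset.sum_ite_eq' (range n) 0 (fun _ => (n : ℂ) • (1 : Module.End ℂ V))]
          rw [if_pos (Finset.mem_range.mpr hn0), smul_smul, inv_mul_cancel₀ hnC, one_smul]
  -- (c1) eigen equation
  have c1 : ∀ i, u * E i = ω ^ i • E i := by
    intro i
    set g : ℕ → Module.End ℂ V := fun k => (ω ^ i * ζ ^ (i * k)) • u ^ k with hg
    have hcoef : ∀ k, ω ^ i * ζ ^ (i * (k + 1)) = ζ ^ (i * k) := by
      intro k
      rw [mul_add, mul_one, pow_add]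
      rw [show ω ^ i * (ζ ^ (i * k) * ζ ^ i) = (ω ^ i * ζ ^ i) * ζ ^ (i * k) by ring,
        ← mul_pow, hωζ, one_pow, one_mul]
    have hgstep : ∀ k, g (k + 1) = ζ ^ (i * k) • u ^ (k + 1) := fun k => by
      rw [hg]; simp only [hcoef k]
    have hgn0 : g n = g 0 := by
      have hz : ζ ^ (i * n) = 1 := by rw [mul_comm, pow_mul, hζn, one_pow]
      simp [hg, hz, hu]
    have hshift : ∑ k ∈ range n, g (k + 1) = ∑ k ∈ range n, g k := by
      have h1 := Finset.sum_range_succ g n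
      have h2 := Finset.sum_range_succ' g n
      rw [h1, hgn0] at h2
      exact add_right_cancel h2.symm
    calc u * E i = (n : ℂ)⁻¹ • ∑ k ∈ range n, ζ ^ (i * k) • u ^ (k + 1) := by
          rw [hE, mul_smul_comm, Finset.mul_sum]
          congr 1
          refine Finset.sum_congr rfl fun k _ => ?_
          rw [mul_smul_comm, ← pow_succ']
      _ = (n : ℂ)⁻¹ • ∑ k ∈ range n, g (k + 1) := by
          simp only [hgstep]
      _ = (n : ℂ)⁻¹ • ∑ k ∈ range n, g k := by rw [hshift]
      _ = ω ^ i • E i := by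
          rw [hE]
          show (n : ℂ)⁻¹ • ∑ k ∈ range n, g k
              = ω ^ i • ((n : ℂ)⁻¹ • ∑ k ∈ range n, ζ ^ (i * k) • u ^ k)
          rw [smul_comm (ω ^ i) ((n : ℂ)⁻¹), Finset.smul_sum (r := ω ^ i)]
          congr 1
          refine Finset.sum_congr rfl fun k _ => ?_
          rw [hg, smul_smul]
  -- iterated eigen equation
  have c1' : ∀ i j, u ^ j * E i = ((ω ^ i) ^ j) • E i := by
    intro i j
    induction j with
    | zero => simp
    | succ j ih =>
        rw [pow_succ, mul_assoc, c1 i, mul_smul_comm, ih, smul_smul, pow_succ, mul_comm]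
  -- (c2) idempotency
  have c2 : ∀ i, E i * E i = E i := by
    intro i
    calc E i * E i = (n : ℂ)⁻¹ • ∑ k ∈ range n, ζ ^ (i * k) • (u ^ k * E i) := by
          conv_lhs => rw [hE]
          rw [smul_mul_assoc, Finset.sum_mul]
          all_goals simp only [smul_mul_assoc]
          all_goals rfl
      _ = (n : ℂ)⁻¹ • ∑ _k ∈ range n, E i := by
          congr 1
          refine Finset.sum_congr rfl fun k _ => ?_
          rw [c1' i k, smul_smul, ← pow_mul, ← mul_pow, mul_comm ζ ω, hωζ, one_pow, one_smul]
      _ = E i := by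
          rw [Finset.sum_const, Finset.card_range, ← Nat.cast_smul_eq_nsmul ℂ, smul_smul,
            inv_mul_cancel₀ hnC, one_smul]
  -- projections and dimensions
  set d : ℕ → ℕ := fun i => Module.finrank ℂ (LinearMap.range (E i)) with hd
  have c3 : ∀ i, LinearMap.trace ℂ V (E i) = (d i : ℂ) := by
    intro i
    have hproj : IsProj (LinearMap.range (E i)) (E i) := by
      constructor
      · intro x; exact LinearMap.mem_range_self _ x
      · rintro x ⟨y, rfl⟩
        exact LinearMap.congr_fun (c2 i) y
    exact hproj.trace
  -- (c4) character values
  have c4 : ∀ j, V.character (a ^ j) = ∑ i ∈ range n, (d i : ℂ) * (ω ^ j) ^ i := by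
    intro j
    have hchar : V.character (a ^ j) = LinearMap.trace ℂ V (u ^ j) := by
      rw [FDRep.character, hudef, map_pow]
    rw [hchar, ← mul_one (u ^ j), ← c0, Finset.mul_sum, map_sum]
    refine Finset.sum_congr rfl fun i _ => ?_
    rw [c1' i j, map_smul, c3 i, smul_eq_mul, mul_comm, pow_right_comm]
  -- rationality data
  obtain ⟨q1, hq1⟩ := hrat a
  set P : Polynomial ℚ := Polynomial.C q1 - ∑ i ∈ range n, Polynomial.C ((d i : ℚ)) * X ^ i
    with hP
  have haevalω : ∀ x : ℂ, (aeval x) P = (q1 : ℂ) - ∑ i ∈ range n, (d i : ℂ) * x ^ i := by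
    intro x
    rw [hP]
    simp only [map_sub, map_sum, map_mul, map_pow, aeval_C, aeval_X, eq_ratCast,
      Rat.cast_natCast]
  have h0 : (aeval ω) P = 0 := by
    rw [haevalω, sub_eq_zero]
    have hc := c4 1
    rw [pow_one, pow_one] at hc
    rw [← hc, hq1]
  have hdvd : minpoly ℚ ω ∣ P := minpoly.dvd ℚ ω h0
  have hmin : minpoly ℚ ω = minpoly ℚ (ω ^ m) := by
    rw [← cyclotomic_eq_minpoly_rat hω hn0, ← cyclotomic_eq_minpoly_rat
      (hω.pow_of_coprime m hm) hn0]
  have h0m : (aeval (ω ^ m)) P = 0 := by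
    rw [hmin] at hdvd
    obtain ⟨Q, hQ⟩ := hdvd
    rw [hQ, map_mul, minpoly.aeval, zero_mul]
  rw [haevalω, sub_eq_zero] at h0m
  rw [c4 m, ← h0m, hq1]

end Spectral

section Perm
open LinearMap Finset
variable (G : Type) [Group G] [Fintype G] (C : Subgroup G)

noncomputable instance : Fintype (G ⧸ C) := by classical exact Quotient.fintype _

/-- The permutation representation on `G ⧸ C`. -/
noncomputable def permRep : FDRep ℂ G :=
  FDRep.of (Representation.ofMulAction ℂ G (G ⧸ C))

lemma permRep_character (g : G) :
    (permRep G C).character g = (Nat.card {q : G ⧸ C // g • q = q} : ℂ) := by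
  classical
  let b : Module.Basis (G ⧸ C) ℂ (MonoidAlgebra ℂ (G ⧸ C)) := MonoidAlgebra.basis (G ⧸ C) ℂ
  have key : (permRep G C).character g
      = Matrix.trace (LinearMap.toMatrix b b (Representation.ofMulAction ℂ G (G ⧸ C) g)) :=
    LinearMap.trace_eq_matrix_trace ℂ b _
  rw [key, Matrix.trace]
  have hdiag : ∀ q : G ⧸ C,
      Matrix.diag (LinearMap.toMatrix b b (Representation.ofMulAction ℂ G (G ⧸ C) g)) q
        = if g • q = q then (1 : ℂ) else 0 := by
    intro q
    rw [Matrix.diag, LinearMap.toMatrix_apply]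
    have : (Representation.ofMulAction ℂ G (G ⧸ C)) g (b q) = MonoidAlgebra.single (g • q) 1 := by
      show (Representation.ofMulAction ℂ G (G ⧸ C)) g (MonoidAlgebra.single q 1) = _
      rw [Representation.ofMulAction_single]
    rw [this]
    simp [b, MonoidAlgebra.basis, Finsupp.single_apply]
  rw [Finset.sum_congr rfl (fun q _ => hdiag q), Finset.sum_boole, Nat.card_eq_fintype_card,
    Fintype.card_subtype]

lemma fixed_iff (g : G) (y : G) :
    g • (QuotientGroup.mk y : G ⧸ C) = QuotientGroup.mk y ↔ y⁻¹ * g * y ∈ C := by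
  rw [show g • (QuotientGroup.mk y : G ⧸ C) = QuotientGroup.mk (g * y) from rfl,
    QuotientGroup.eq]
  constructor
  · intro h
    have := C.inv_mem h
    simpa [mul_assoc] using this
  · intro h
    have := C.inv_mem h
    simpa [mul_assoc] using this

lemma card_conj_set (g : G) :
    Nat.card {x : G // x⁻¹ * g * x ∈ C}
      = Nat.card C * Nat.card {q : G ⧸ C // g • q = q} := by
  classical
  have he : {x : G // x⁻¹ * g * x ∈ C}
      ≃ (QuotientGroup.mk ⁻¹' {q : G ⧸ C | g • q = q} : Set G) := by
    refine Equiv.subtypeEquiv (Equiv.refl G) fun y => ?_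
    simp only [Equiv.refl_apply, Set.mem_preimage, Set.mem_setOf_eq]
    exact (fixed_iff G C g y).symm
  rw [Nat.card_congr he,
    Nat.card_congr (QuotientGroup.preimageMkEquivSubgroupProdSet C {q : G ⧸ C | g • q = q}),
    Nat.card_prod]
  rfl

lemma indTriv_eq_character : indTriv G C = (permRep G C).character := by
  classical
  funext g
  rw [indTriv, permRep_character, card_conj_set]
  have hC : (Nat.card C : ℂ) ≠ 0 := Nat.cast_ne_zero.mpr Nat.card_pos.ne'
  push_cast
  field_simp

end Perm

section Six
variable {G : Type} [Group G] [Fintype G]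

lemma indTriv_ratValued (C : Subgroup G) : IsRatValued (indTriv G C) := by
  intro g
  exact ⟨(Nat.card {x : G // x⁻¹ * g * x ∈ C} : ℚ) / (Nat.card C : ℚ), by
    rw [indTriv]; push_cast; ring⟩

lemma indTriv_ne_zero (C : Subgroup G) : indTriv G C ≠ 0 := by
  intro h
  have h1 := congrFun h 1
  rw [indTriv] at h1
  have hall : ∀ x : G, x⁻¹ * 1 * x ∈ C := fun x => by
    simpa using C.one_mem
  have hcard : Nat.card {x : G // x⁻¹ * 1 * x ∈ C} = Nat.card G := by
    exact Nat.card_congr (Equiv.subtypeUnivEquiv hall)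
  rw [hcard] at h1
  have hG : (Nat.card G : ℂ) ≠ 0 := Nat.cast_ne_zero.mpr Nat.card_pos.ne'
  have hC : (Nat.card C : ℂ) ≠ 0 := Nat.cast_ne_zero.mpr Nat.card_pos.ne'
  exact hG (by field_simp at h1; rw [Pi.zero_apply, mul_zero] at h1; exact h1)

lemma mem_conj_iff {g h : G} (hzp : Subgroup.zpowers g = Subgroup.zpowers h)
    (C : Subgroup G) (x : G) : x⁻¹ * g * x ∈ C → x⁻¹ * h * x ∈ C := by
  intro hx
  have hh : h ∈ Subgroup.zpowers g := hzp ▸ Subgroup.mem_zpowers h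
  obtain ⟨z, rfl⟩ := hh
  have : x⁻¹ * g ^ z * x = (x⁻¹ * g * x) ^ z := by
    rw [show x⁻¹ * g * x = x⁻¹ * g * x⁻¹⁻¹ by rw [inv_inv], conj_zpow, inv_inv]
  rw [this]
  exact C.zpow_mem hx z

lemma indTriv_const (C : Subgroup G) {g h : G} (hr : rrel G g h) :
    indTriv G C g = indTriv G C h := by
  obtain ⟨k, hk⟩ := hr
  rw [map_conj_zpowers] at hk
  have step1 : indTriv G C g = indTriv G C (k * g * k⁻¹) := by
    rw [indTriv, indTriv]
    congr 2
    refine Nat.card_congr (Equiv.subtypeEquiv (Equiv.mulLeft k) fun x => ?_)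
    have : ((k * x)⁻¹ * (k * g * k⁻¹) * (k * x)) = x⁻¹ * g * x := by group
    rw [show (Equiv.mulLeft k) x = k * x from rfl, this]
  have step2 : indTriv G C (k * g * k⁻¹) = indTriv G C h := by
    rw [indTriv, indTriv]
    congr 2
    refine Nat.card_congr (Equiv.subtypeEquiv (Equiv.refl G) fun x => ?_)
    simp only [Equiv.refl_apply]
    exact ⟨mem_conj_iff hk C x, mem_conj_iff hk.symm C x⟩
  rw [step1, step2]

lemma indTriv_vanish {x g : G} (hne : indTriv G (Subgroup.zpowers x) g ≠ 0) :
    rrel G g x ∨ orderOf g < orderOf x := by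
  have hnum : Nat.card {y : G // y⁻¹ * g * y ∈ Subgroup.zpowers x} ≠ 0 := by
    intro h0
    rw [indTriv, h0] at hne
    simp at hne
  have hne' : Nonempty {y : G // y⁻¹ * g * y ∈ Subgroup.zpowers x} := by
    rcases isEmpty_or_nonempty {y : G // y⁻¹ * g * y ∈ Subgroup.zpowers x} with h | h
    · exact absurd Nat.card_of_isEmpty hnum
    · exact h
  obtain ⟨⟨y, hy⟩⟩ := hne'
  have hle : Subgroup.zpowers (y⁻¹ * g * y) ≤ Subgroup.zpowers x := Subgroup.zpowers_le.mpr hy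
  have horder : orderOf (y⁻¹ * g * y) = orderOf g := by
    have : y⁻¹ * g * y = (MulAut.conj y⁻¹).toMonoidHom g := by
      show _ = y⁻¹ * g * y⁻¹⁻¹; rw [inv_inv]
    rw [this]
    exact orderOf_injective _ (MulAut.conj y⁻¹).injective g
  have hcardle : orderOf g ≤ orderOf x := by
    rw [← horder, ← Nat.card_zpowers, ← Nat.card_zpowers]
    exact Subgroup.card_le_of_le hle
  rcases lt_or_eq_of_le hcardle with h | h
  · exact Or.inr h
  · left
    have heq : Subgroup.zpowers (y⁻¹ * g * y) = Subgroup.zpowers x := by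
      refine Subgroup.eq_of_le_of_card_ge hle ?_
      rw [Nat.card_zpowers, Nat.card_zpowers, horder, h]
    exact ⟨y⁻¹, by rw [map_conj_zpowers, inv_inv, heq]⟩

lemma indTriv_self_ne_zero (x : G) : indTriv G (Subgroup.zpowers x) x ≠ 0 := by
  rw [indTriv]
  have h1 : (1 : G)⁻¹ * x * 1 ∈ Subgroup.zpowers x := by
    simpa using Subgroup.mem_zpowers x
  have hnum : Nat.card {y : G // y⁻¹ * x * y ∈ Subgroup.zpowers x} ≠ 0 := by
    have : Nonempty {y : G // y⁻¹ * x * y ∈ Subgroup.zpowers x} := ⟨⟨1, h1⟩⟩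
    exact Nat.card_pos.ne'
  have hC : (Nat.card (Subgroup.zpowers x) : ℂ) ≠ 0 := Nat.cast_ne_zero.mpr Nat.card_pos.ne'
  exact div_ne_zero (Nat.cast_ne_zero.mpr hnum) hC

lemma ratchar_const {χ : G → ℂ} (hchar : IsCharacter G χ) (hrat : IsRatValued χ) :
    ∀ g h : G, rrel G g h → χ g = χ h := by
  obtain ⟨V, rfl, -⟩ := hchar
  intro g h hr
  obtain ⟨k, hk⟩ := hr
  rw [map_conj_zpowers] at hk
  set g' := k * g * k⁻¹ with hg'
  have e1 : V.character g = V.character g' := (FDRep.char_conj V g k).symm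
  have hmem : h ∈ Subgroup.zpowers g' := hk ▸ Subgroup.mem_zpowers h
  have hmem' : h ∈ Submonoid.powers g' := mem_powers_iff_mem_zpowers.mpr hmem
  obtain ⟨m, hmh'⟩ := hmem'
  have hmh : g' ^ m = h := hmh'
  have hords : orderOf g' = orderOf h := by
    rw [← Nat.card_zpowers, ← Nat.card_zpowers, hk]
  have hcop : Nat.Coprime m (orderOf g') := by
    have h1 : orderOf (g' ^ m) = orderOf g' / Nat.gcd (orderOf g') m := orderOf_pow g'
    rw [hmh, ← hords] at h1
    have h2 : Nat.gcd (orderOf g') m = 1 := by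
      rcases Nat.div_eq_self.mp h1.symm with h | h
      · exact absurd h (orderOf_pos g').ne'
      · exact h
    rw [Nat.Coprime, Nat.gcd_comm]
    exact h2
  have e2 : V.character (g' ^ m) = V.character g' := char_pow_coprime V hrat g' m hcop
  rw [e1, ← e2, hmh]

end Six


section Seven
open Finset
variable {G : Type} [Group G] [Fintype G]

lemma indTriv_isCharacter (C : Subgroup G) : IsCharacter G (indTriv G C) :=
  ⟨permRep G C, indTriv_eq_character G C, indTriv_ne_zero C⟩

lemma Phi_mem_span : ∀ x : G, Phi G x ∈ ratCharSpan G := by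
  suffices H : ∀ n : ℕ, ∀ x : G, orderOf x = n → Phi G x ∈ ratCharSpan G by
    exact fun x => H (orderOf x) x rfl
  intro n
  induction n using Nat.strong_induction_on with
  | _ n IH =>
    intro x hx
    classical
    set C := Subgroup.zpowers x with hC
    set f := indTriv G C with hfdef
    have hf_mem : f ∈ ratCharSpan G :=
      Submodule.subset_span ⟨indTriv_isCharacter C, indTriv_ratValued C⟩
    have hconst : ∀ g h : G, rrel G g h → f g = f h := fun g h hr => indTriv_const C hr
    have hdecomp := eq_sum_phib G f hconst
    set c := f (⟦x⟧ : QG G).out with hc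
    have hcx : c = f x := hconst _ _ ((rrel_iff_eq G _ _).2 (Quotient.out_eq _))
    have hc0 : c ≠ 0 := by rw [hcx, hfdef, hC]; exact indTriv_self_ne_zero x
    have hsum : f = c • phib G ⟦x⟧ + ∑ q ∈ Finset.univ.erase ⟦x⟧, f q.out • phib G q := by
      conv_lhs => rw [hdecomp]
      exact (Finset.add_sum_erase _ (fun q => f q.out • phib G q)
        (Finset.mem_univ (⟦x⟧ : QG G))).symm
    have hrest : ∑ q ∈ Finset.univ.erase ⟦x⟧, f q.out • phib G q ∈ ratCharSpan G := by
      refine Submodule.sum_mem _ fun q hq => ?_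
      rcases eq_or_ne (f q.out) 0 with h0 | h0
      · rw [h0, zero_smul]; exact Submodule.zero_mem _
      · rcases indTriv_vanish h0 with hr | hlt
        · exact absurd ((rrel_iff_eq G _ _).1 hr ▸ (Quotient.out_eq q).symm)
            (fun hqq => (Finset.mem_erase.mp hq).1 hqq)
        · have hPhi : Phi G q.out ∈ ratCharSpan G := IH (orderOf q.out) (hx ▸ hlt) q.out rfl
          exact Submodule.smul_mem _ _ hPhi
    have hφeq : c • phib G ⟦x⟧
        = f - ∑ q ∈ Finset.univ.erase ⟦x⟧, f q.out • phib G q :=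
      eq_sub_of_add_eq hsum.symm
    have hφ : phib G ⟦x⟧ = c⁻¹ • (f - ∑ q ∈ Finset.univ.erase ⟦x⟧, f q.out • phib G q) := by
      rw [← hφeq, smul_smul, inv_mul_cancel₀ hc0, one_smul]
    rw [Phi_eq_phib G x, hφ]
    exact Submodule.smul_mem _ _ (Submodule.sub_mem _ hf_mem hrest)

lemma ratCharSpan_eq_span_phib :
    ratCharSpan G = Submodule.span ℂ (Set.range (phib G)) := by
  apply le_antisymm
  · rw [ratCharSpan, Submodule.span_le]
    rintro χ ⟨hchar, hrat⟩
    exact mem_span_phib G χ (ratchar_const hchar hrat)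
  · rw [Submodule.span_le]
    rintro _ ⟨q, rfl⟩
    exact Phi_mem_span q.out

end Seven

/-- The dimension of the subspace of class functions spanned by the rational valued
characters equals the number of conjugacy classes of cyclic subgroups. -/
theorem stmt0 (G : Type) [Group G] [Fintype G] :
    Module.finrank ℂ (ratCharSpan G) = numCyclicClasses G := by
  rw [ratCharSpan_eq_span_phib, finrank_span_phib, card_QG]
end

section
/- Let G be a finite group of exponent n, H a cyclic subgroup with representative generator x, and Φ the indicator function of {g ∈ G : ⟨g⟩ conjugate to H}. Then |N_G(H)| · Φ lies in the ℚ-span of the induced characters {(1_C)^G : C cyclic subgroup of G}. -/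
noncomputable section AuxStmt9

/-- Indicator of `⟨g⟩` being conjugate to the subgroup `H`. -/
noncomputable def PhiSub (G : Type) [Group G] (H : Subgroup G) : G → ℂ := fun g =>
  letI := Classical.propDecidable
  if SubConj (Subgroup.zpowers g) H then 1 else 0

variable {G : Type} [Group G]

open scoped Classical

lemma conj_map_map (a b : G) (K : Subgroup G) :
    Subgroup.map (MulAut.conj b).toMonoidHom (Subgroup.map (MulAut.conj a).toMonoidHom K)
      = Subgroup.map (MulAut.conj (b * a)).toMonoidHom K := by
  rw [Subgroup.map_map]
  congr 1
  ext x
  simp [mul_assoc]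

lemma conj_map_one (K : Subgroup G) :
    Subgroup.map (MulAut.conj (1 : G)).toMonoidHom K = K := by
  ext x; simp

lemma mem_normalizer_iff_map (C : Subgroup G) (n : G) :
    n ∈ (Subgroup.normalizer (C : Set G)) ↔ Subgroup.map (MulAut.conj n).toMonoidHom C = C := by
  rw [Subgroup.mem_normalizer_iff]
  constructor
  · intro h
    ext x
    simp only [Subgroup.mem_map, MulEquiv.coe_toMonoidHom, MulAut.conj_apply]
    constructor
    · rintro ⟨c, hc, rfl⟩
      exact (h c).1 hc
    · intro hx
      refine ⟨n⁻¹ * x * n, ?_, by group⟩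
      have := (h (n⁻¹ * x * n)).2
      apply this
      convert hx using 1
      group
  · intro h x
    constructor
    · intro hx
      rw [← h]
      exact ⟨x, hx, by simp⟩
    · intro hx
      rw [← h] at hx
      obtain ⟨c, hc, hcx⟩ := hx
      simp only [MulEquiv.coe_toMonoidHom, MulAut.conj_apply] at hcx
      have : c = x := by
        have := hcx
        apply mul_left_cancel (a := n)
        apply mul_right_cancel (b := n⁻¹)
        simpa [mul_assoc] using this
      rwa [← this]

lemma zpowers_conj (g y : G) :
    Subgroup.zpowers (y⁻¹ * g * y)
      = Subgroup.map (MulAut.conj y⁻¹).toMonoidHom (Subgroup.zpowers g) := by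
  rw [MonoidHom.map_zpowers]
  simp

/-- Fiber cardinality: the number of `y` with `⟨y⁻¹gy⟩ = C` is `|N(C)| · Φ_C(g)`. -/
lemma fiber_card [Fintype G] (C : Subgroup G) (g : G) :
    (Nat.card {y : G // Subgroup.zpowers (y⁻¹ * g * y) = C} : ℂ)
      = (Nat.card (Subgroup.normalizer (C : Set G)) : ℂ) * PhiSub G C g := by
  classical
  by_cases hconj : SubConj (Subgroup.zpowers g) C
  · obtain ⟨a, ha⟩ := hconj
    -- y₀ := a⁻¹ satisfies zpowers (y₀⁻¹ g y₀) = C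
    set y₀ : G := a⁻¹ with hy₀def
    have hy₀ : Subgroup.map (MulAut.conj y₀⁻¹).toMonoidHom (Subgroup.zpowers g) = C := by
      rw [hy₀def, inv_inv]; exact ha
    have e : {y : G // Subgroup.zpowers (y⁻¹ * g * y) = C} ≃ (Subgroup.normalizer (C : Set G)) := by
      refine ⟨fun y => ⟨y₀⁻¹ * y.1, ?_⟩, fun n => ⟨y₀ * n.1, ?_⟩, ?_, ?_⟩
      · obtain ⟨y, hy⟩ := y
        rw [zpowers_conj] at hy
        rw [mem_normalizer_iff_map]
        calc Subgroup.map (MulAut.conj (y₀⁻¹ * y)).toMonoidHom C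
            = Subgroup.map (MulAut.conj (y₀⁻¹ * y)).toMonoidHom
                (Subgroup.map (MulAut.conj y⁻¹).toMonoidHom (Subgroup.zpowers g)) := by rw [hy]
          _ = Subgroup.map (MulAut.conj (y₀⁻¹ * y * y⁻¹)).toMonoidHom (Subgroup.zpowers g) := by
                rw [conj_map_map]
          _ = C := by rw [mul_inv_cancel_right]; exact hy₀
      · obtain ⟨n, hn⟩ := n
        rw [mem_normalizer_iff_map] at hn
        have hninv : Subgroup.map (MulAut.conj n⁻¹).toMonoidHom C = C := by
          have := congrArg (Subgroup.map (MulAut.conj n⁻¹).toMonoidHom) hn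
          rw [conj_map_map, inv_mul_cancel, conj_map_one] at this
          exact this.symm
        rw [zpowers_conj]
        calc Subgroup.map (MulAut.conj (y₀ * n)⁻¹).toMonoidHom (Subgroup.zpowers g)
            = Subgroup.map (MulAut.conj (n⁻¹ * y₀⁻¹)).toMonoidHom (Subgroup.zpowers g) := by
              rw [mul_inv_rev]
          _ = Subgroup.map (MulAut.conj n⁻¹).toMonoidHom
                (Subgroup.map (MulAut.conj y₀⁻¹).toMonoidHom (Subgroup.zpowers g)) := by
              rw [conj_map_map]
          _ = C := by rw [hy₀]; exact hninv
      · intro y; exact Subtype.ext (by simp)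
      · intro n; exact Subtype.ext (by simp)
    rw [Nat.card_congr e]
    have : PhiSub G C g = 1 := by
      rw [PhiSub]; exact if_pos ⟨a, ha⟩
    rw [this, mul_one]
  · have hempty : IsEmpty {y : G // Subgroup.zpowers (y⁻¹ * g * y) = C} := by
      constructor
      rintro ⟨y, hy⟩
      rw [zpowers_conj] at hy
      exact hconj ⟨y⁻¹, hy⟩
    rw [Nat.card_of_isEmpty]
    have : PhiSub G C g = 0 := by
      rw [PhiSub]; exact if_neg hconj
    rw [this, mul_zero, Nat.cast_zero]

lemma main_id [Fintype G] (H : Subgroup G) (g : G) :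
    (Nat.card H : ℂ) * indTriv G H g
      = ∑ C ∈ Finset.univ.filter (fun C : Subgroup G => C ≤ H),
          (Nat.card (Subgroup.normalizer (C : Set G)) : ℂ) * PhiSub G C g := by
  classical
  have hHpos : (Nat.card H : ℂ) ≠ 0 := Nat.cast_ne_zero.2 Nat.card_pos.ne'
  have hlhs : (Nat.card H : ℂ) * indTriv G H g
      = (Nat.card {y : G // y⁻¹ * g * y ∈ H} : ℂ) := by
    rw [indTriv, mul_div_cancel₀ _ hHpos]
  rw [hlhs]
  -- count via fibers
  have hcount : Nat.card {y : G // y⁻¹ * g * y ∈ H}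
      = ∑ C ∈ Finset.univ.filter (fun C : Subgroup G => C ≤ H),
          Nat.card {y : G // Subgroup.zpowers (y⁻¹ * g * y) = C} := by
    have h1 : Nat.card {y : G // y⁻¹ * g * y ∈ H}
        = (Finset.univ.filter (fun y : G => y⁻¹ * g * y ∈ H)).card := by
      rw [Nat.card_eq_fintype_card, Fintype.card_subtype]
    have h2 : ∀ C : Subgroup G, Nat.card {y : G // Subgroup.zpowers (y⁻¹ * g * y) = C}
        = (Finset.univ.filter (fun y : G => Subgroup.zpowers (y⁻¹ * g * y) = C)).card := by
      intro C
      rw [Nat.card_eq_fintype_card, Fintype.card_subtype]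
    rw [h1]
    rw [Finset.card_eq_sum_card_fiberwise
      (f := fun y : G => Subgroup.zpowers (y⁻¹ * g * y))
      (t := Finset.univ.filter (fun C : Subgroup G => C ≤ H))
      (fun y hy => by
        simp only [Finset.mem_coe, Finset.mem_filter, Finset.mem_univ, true_and] at hy ⊢
        exact (Subgroup.zpowers_le).2 hy)]
    refine Finset.sum_congr rfl fun C hC => ?_
    simp only [Finset.mem_filter, Finset.mem_univ, true_and] at hC
    rw [h2 C]
    congr 1
    ext y
    simp only [Finset.mem_filter, Finset.mem_univ, true_and, and_iff_right_iff_imp]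
    intro hy
    exact hC (hy ▸ Subgroup.mem_zpowers _)
  rw [hcount, Nat.cast_sum]
  exact Finset.sum_congr rfl fun C _ => fiber_card C g

lemma isCyclic_of_le {H C : Subgroup G} (hc : IsCyclic H) (hle : C ≤ H) : IsCyclic C := by
  haveI := hc
  haveI : IsCyclic (C.subgroupOf H) := Subgroup.isCyclic _
  exact isCyclic_of_surjective (Subgroup.subgroupOfEquivOfLe hle).toMonoidHom
    (Subgroup.subgroupOfEquivOfLe hle).surjective

lemma key [Fintype G] : ∀ n : ℕ, ∀ H : Subgroup G, Nat.card H = n → IsCyclic H →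
    ((Nat.card (Subgroup.normalizer (H : Set G)) : ℂ) • PhiSub G H) ∈
      Submodule.span ℚ {f : G → ℂ | ∃ C : Subgroup G, IsCyclic ↥C ∧ f = indTriv G C} := by
  classical
  intro n
  induction n using Nat.strong_induction_on with
  | _ n ih =>
    intro H hcard hcyc
    set S : Finset (Subgroup G) := Finset.univ.filter (fun C : Subgroup G => C ≤ H) with hS
    have hHS : H ∈ S := by simp [hS]
    have hfun : (Nat.card H : ℂ) • indTriv G H
        = ∑ C ∈ S, (Nat.card (Subgroup.normalizer (C : Set G)) : ℂ) • PhiSub G C := by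
      funext g
      simpa [Finset.sum_apply] using main_id H g
    have hsplit : ∑ C ∈ S, (Nat.card (Subgroup.normalizer (C : Set G)) : ℂ) • PhiSub G C
        = (Nat.card (Subgroup.normalizer (H : Set G)) : ℂ) • PhiSub G H
          + ∑ C ∈ S.erase H, (Nat.card (Subgroup.normalizer (C : Set G)) : ℂ) • PhiSub G C :=
      (Finset.add_sum_erase S _ hHS).symm
    have heq : (Nat.card (Subgroup.normalizer (H : Set G)) : ℂ) • PhiSub G H
        = (Nat.card H : ℂ) • indTriv G H
          - ∑ C ∈ S.erase H, (Nat.card (Subgroup.normalizer (C : Set G)) : ℂ) • PhiSub G C := by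
      rw [hfun, hsplit]; abel
    rw [heq]
    apply Submodule.sub_mem
    · have hmem : indTriv G H ∈
          {f : G → ℂ | ∃ C : Subgroup G, IsCyclic ↥C ∧ f = indTriv G C} := ⟨H, hcyc, rfl⟩
      have : (Nat.card H : ℂ) • indTriv G H = ((Nat.card H : ℚ)) • indTriv G H := by
        funext g; simp [Rat.smul_def]
      rw [this]
      exact Submodule.smul_mem _ _ (Submodule.subset_span hmem)
    · apply Submodule.sum_mem
      intro C hC
      have hCH : C ≤ H ∧ C ≠ H := by
        simp only [Finset.mem_erase, hS, Finset.mem_filter, Finset.mem_univ, true_and] at hC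
        exact ⟨hC.2, hC.1⟩
      have hlt : Nat.card C < n := by
        rw [← hcard]
        refine lt_of_le_of_ne (Subgroup.card_le_of_le hCH.1) fun h => hCH.2 ?_
        exact Subgroup.eq_of_le_of_card_ge hCH.1 h.ge
      exact ih (Nat.card C) hlt C rfl (isCyclic_of_le hcyc hCH.1)

end AuxStmt9

theorem stmt9 (G : Type) [Group G] [Fintype G] (x : G) :
    (Nat.card (Subgroup.normalizer (Subgroup.zpowers x : Set G)) : ℂ) • Phi G x ∈
      Submodule.span ℚ {f : G → ℂ | ∃ C : Subgroup G, IsCyclic ↥C ∧ f = indTriv G C} := by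
  have h : Phi G x = PhiSub G (Subgroup.zpowers x) := rfl
  rw [h]
  have hcyc : IsCyclic ↥(Subgroup.zpowers x) := by
    refine ⟨⟨⟨x, Subgroup.mem_zpowers x⟩, ?_⟩⟩
    rintro ⟨y, hy⟩
    obtain ⟨k, hk⟩ := Subgroup.mem_zpowers_iff.mp hy
    exact Subgroup.mem_zpowers_iff.mpr ⟨k, Subtype.ext (by push_cast [SubgroupClass.coe_zpow]; exact hk)⟩
  exact key (Nat.card (Subgroup.zpowers x)) _ rfl hcyc
end
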